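/- Let σ̃ be the L^p modulus of continuity of f at the origin over parabolic cylinders, σ̃(r) = sup_{ρ∈(0,r]} ( |Q_ρ⁻|^{-1} ∫_{Q_ρ⁻} |f − f(0)|^p )^{1/p}, extended by σ̃(r) = σ̃(1) for r ≥ 1, and let σ be the Gaussian-weighted modulus σ(r) = sup_{ρ∈(0,r]} ( ρ^{-2} ∫_{S_ρ} |f−f(0)|^p G(x,−t) dx dt )^{1/p}, where f is supported in Q₁⁻. Then for all r ∈ (0,1], σ(r) ≤ C ( σ̃(r) + σ̃(√r) + σ̃(1) e^{−c/r} ), with constants c, C > 0 depending only on n and p. In particular, if σ̃ is Dini then so is σ. -/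

import Mathlib

open MeasureTheory Set Real
open scoped NNReal ENNReal


lemma pow_le_fact_mul_exp (m : ℕ) {z : ℝ} (hz : 0 ≤ z) :
    z ^ m ≤ (Nat.factorial m : ℝ) * Real.exp z := by
  have h := Real.sum_le_exp_of_nonneg hz (m + 1)
  have h2 : z ^ m / (Nat.factorial m : ℝ) ≤ ∑ i ∈ Finset.range (m + 1), z ^ i / i.factorial :=
    Finset.single_le_sum (f := fun i => z ^ i / (Nat.factorial i : ℝ))
      (fun i _ => by positivity) (Finset.self_mem_range_succ m)
  have hm : (0:ℝ) < (Nat.factorial m : ℝ) := by exact_mod_cast Nat.factorial_pos m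
  have h3 := h2.trans h
  rw [div_le_iff₀ hm] at h3
  linarith [h3]

lemma sq_div_two_le_exp {z : ℝ} (hz : 0 ≤ z) : z ^ 2 ≤ 2 * Real.exp z := by
  have := pow_le_fact_mul_exp 2 hz
  norm_num [Nat.factorial] at this
  linarith

lemma real_rpow_add_le {A B q : ℝ} (hA : 0 ≤ A) (hB : 0 ≤ B) (hq0 : 0 ≤ q) (hq1 : q ≤ 1) :
    (A + B) ^ q ≤ A ^ q + B ^ q := by
  have h := NNReal.rpow_add_le_add_rpow A.toNNReal B.toNNReal hq0 hq1
  have hcoe : ((A.toNNReal + B.toNNReal : ℝ≥0) : ℝ) = A + B := by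
    simp [Real.coe_toNNReal _ hA, Real.coe_toNNReal _ hB]
  calc (A + B) ^ q = (((A.toNNReal + B.toNNReal : ℝ≥0) : ℝ)) ^ q := by rw [hcoe]
    _ = (((A.toNNReal + B.toNNReal : ℝ≥0) ^ q : ℝ≥0) : ℝ) := by
        rw [NNReal.coe_rpow]
    _ ≤ ((A.toNNReal ^ q + B.toNNReal ^ q : ℝ≥0) : ℝ) := by exact_mod_cast h
    _ = A ^ q + B ^ q := by
        push_cast [NNReal.coe_rpow]
        rw [Real.coe_toNNReal _ hA, Real.coe_toNNReal _ hB]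

lemma euclidean_ball_vol (n : ℕ) {s : ℝ} (hs : 0 < s) :
    volume (Metric.ball (0 : EuclideanSpace ℝ (Fin n)) s)
      = ENNReal.ofReal (s ^ n) * volume (Metric.ball (0 : EuclideanSpace ℝ (Fin n)) 1) := by
  cases n with
  | zero =>
      have hd : ∀ x : EuclideanSpace ℝ (Fin 0), dist x 0 = 0 := by
        intro x
        rw [EuclideanSpace.dist_eq]
        simp
      have hball : ∀ t : ℝ, 0 < t → Metric.ball (0 : EuclideanSpace ℝ (Fin 0)) t = univ := by
        intro t ht; ext x; simp [Metric.mem_ball, hd x, ht]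
      rw [hball s hs, hball 1 one_pos]
      simp
  | succ m =>
      rw [Measure.addHaar_ball volume (0 : EuclideanSpace ℝ (Fin (m+1))) hs.le,
        finrank_euclideanSpace_fin]

lemma exists_dyadic (M : ℝ) (h0 : 0 < M) (h1 : M ≤ 1) :
    ∃ k : ℕ, (1/2:ℝ) ^ (k+1) < M ∧ M ≤ (1/2:ℝ) ^ k := by
  have hex : ∃ j : ℕ, (1/2:ℝ) ^ j < M := exists_pow_lt_of_lt_one h0 (by norm_num)
  classical
  let j := Nat.find hex
  have hj : (1/2:ℝ) ^ j < M := Nat.find_spec hex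
  have hj0 : j ≠ 0 := by
    intro h
    rw [h] at hj; norm_num at hj; linarith
  obtain ⟨k, hk⟩ := Nat.exists_eq_succ_of_ne_zero hj0
  refine ⟨k, by rw [hk] at hj; simpa using hj, ?_⟩
  have hmin := Nat.find_min hex (m := k) (by omega)
  linarith [not_lt.mp hmin]

lemma exists_dyadic_sq {ρ : ℝ} (h0 : 0 < ρ) (h1 : ρ ≤ 1) :
    ∃ k : ℕ, ρ^2 ≤ (1/4:ℝ) ^ k ∧ (1/4:ℝ) ^ k ≤ 4 * ρ^2 := by
  have hex : ∃ j : ℕ, (1/4:ℝ) ^ j < 4 * ρ^2 := exists_pow_lt_of_lt_one (by positivity) (by norm_num)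
  classical
  let j := Nat.find hex
  have hj : (1/4:ℝ) ^ j < 4 * ρ^2 := Nat.find_spec hex
  refine ⟨j, ?_, hj.le⟩
  rcases Nat.eq_zero_or_pos j with h | h
  · rw [h]; simp only [pow_zero]; nlinarith
  · have := Nat.find_min hex (m := j - 1) (by omega)
    have h2 : 4 * ρ^2 ≤ (1/4:ℝ) ^ (j-1) := not_lt.mp this
    have h3 : (1/4:ℝ) ^ (j-1) = 4 * (1/4:ℝ) ^ j := by
      have : j - 1 + 1 = j := by omega
      calc (1/4:ℝ) ^ (j-1) = 4 * ((1/4:ℝ) ^ (j-1) * (1/4)) := by ring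
        _ = 4 * (1/4:ℝ) ^ (j - 1 + 1) := by rw [pow_succ]
        _ = 4 * (1/4:ℝ) ^ j := by rw [this]
    nlinarith

/-- Pointwise Gaussian weight bound on a parabolic annulus. -/
lemma weight_pointwise (n k : ℕ) {ρ a s : ℝ} (hρ : 0 < ρ) (hs : 0 < s) (hsρ : s < ρ)
    (ha : 0 ≤ a) (h1 : (1/2:ℝ) ^ (k+1) < max a s) (h2 : max a s ≤ (1/2:ℝ) ^ k) :
    ((s^2:ℝ)) ^ (-(n:ℝ)/2) * Real.exp (-(a^2/(4*s^2)))
      ≤ (8^n * (Nat.factorial n : ℝ) * Real.exp (1/8)) * ((2:ℝ)^n) ^ (k+1)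
        * Real.exp (-(a^2/(8*ρ^2))) := by
  have hb : (0:ℝ) < (1/2:ℝ) ^ (k+1) := by positivity
  have hfact : (1:ℝ) ≤ 8^n * (Nat.factorial n : ℝ) := by
    have h8 : (1:ℝ) ≤ 8^n := one_le_pow₀ (by norm_num)
    have hf : (1:ℝ) ≤ (Nat.factorial n : ℝ) := by
      exact_mod_cast Nat.one_le_iff_ne_zero.mpr (Nat.factorial_pos n).ne'
    nlinarith
  have hrw : ((s^2:ℝ)) ^ (-(n:ℝ)/2) = (s ^ n)⁻¹ := by
    rw [show ((s:ℝ)^2) = s ^ (2:ℕ) from rfl, ← Real.rpow_natCast s 2,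
      ← Real.rpow_mul hs.le,
      show ((2:ℕ):ℝ) * (-(n:ℝ)/2) = -(n:ℝ) by push_cast; ring,
      Real.rpow_neg hs.le, Real.rpow_natCast]
  rw [hrw]
  have hinv : ((1/2:ℝ)^(k+1))^n * ((2:ℝ)^n)^(k+1) = 1 := by
    rw [← pow_mul, ← pow_mul, mul_comm n (k+1), ← mul_pow]; norm_num
  have hBpos : (0:ℝ) < ((1/2:ℝ)^(k+1))^n := by positivity
  have h2n : ((2:ℝ)^n)^(k+1) = (((1/2:ℝ)^(k+1))^n)⁻¹ :=
    eq_inv_of_mul_eq_one_left (by linarith [hinv] )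
  rcases le_or_gt a s with hcase | hcase
  · -- a ≤ s : max = s
    have hmax : max a s = s := max_eq_right hcase
    rw [hmax] at h1 h2
    have hsn : (s^n)⁻¹ ≤ ((2:ℝ)^n)^(k+1) := by
      rw [h2n]
      exact inv_anti₀ hBpos (pow_le_pow_left₀ hb.le h1.le n)
    have he1 : Real.exp (-(a^2/(4*s^2))) ≤ 1 :=
      Real.exp_le_one_iff.mpr (neg_nonpos.mpr (by positivity))
    have he2 : Real.exp (1/8) * Real.exp (-(a^2/(8*ρ^2))) ≥ 1 := by
      rw [← Real.exp_add]
      rw [show (1:ℝ)/8 + -(a^2/(8*ρ^2)) = (ρ^2 - a^2)/(8*ρ^2) by field_simp; ring]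
      have : (0:ℝ) ≤ (ρ^2 - a^2)/(8*ρ^2) := by
        apply div_nonneg _ (by positivity)
        nlinarith [hcase.trans_lt hsρ]
      linarith [Real.add_one_le_exp ((ρ^2 - a^2)/(8*ρ^2))]
    have hsn0 : (0:ℝ) < (s^n)⁻¹ := by positivity
    calc (s^n)⁻¹ * Real.exp (-(a^2/(4*s^2))) ≤ (s^n)⁻¹ * 1 := by
          exact mul_le_mul_of_nonneg_left he1 hsn0.le
      _ = (s^n)⁻¹ := mul_one _
      _ ≤ ((2:ℝ)^n)^(k+1) := hsn
      _ = 1 * ((2:ℝ)^n)^(k+1) * 1 := by ring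
      _ ≤ (8^n * (Nat.factorial n : ℝ)) * ((2:ℝ)^n)^(k+1)
            * (Real.exp (1/8) * Real.exp (-(a^2/(8*ρ^2)))) := by
          have hp : (0:ℝ) < ((2:ℝ)^n)^(k+1) := by positivity
          have := mul_le_mul_of_nonneg_right hfact hp.le
          nlinarith [this, he2, mul_pos hp (lt_of_lt_of_le one_pos hfact)]
      _ = (8^n * (Nat.factorial n : ℝ) * Real.exp (1/8)) * ((2:ℝ)^n)^(k+1)
            * Real.exp (-(a^2/(8*ρ^2))) := by ring
  · -- s < a : max = a
    have hmax : max a s = a := max_eq_left hcase.le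
    rw [hmax] at h1 h2
    have ha0 : 0 < a := hs.trans hcase
    have han : (a^n)⁻¹ ≤ ((2:ℝ)^n)^(k+1) := by
      rw [h2n]
      exact inv_anti₀ hBpos (pow_le_pow_left₀ hb.le h1.le n)
    -- key: (a/s)^n * exp(-((a/s)^2/8)) ≤ 8^n * n!
    have hw : (1:ℝ) < a / s := (one_lt_div hs).mpr hcase
    have hw0 : (0:ℝ) ≤ (a/s)^2/8 := by positivity
    have h1n : (a/s)^n ≤ 8^n * (Nat.factorial n : ℝ) * Real.exp ((a/s)^2/8) := by
      have hstep : (a/s)^n ≤ ((a/s)^2)^n := by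
        rw [← pow_mul]
        exact pow_le_pow_right₀ hw.le (by omega)
      have h8 : ((a/s)^2)^n = 8^n * ((a/s)^2/8)^n := by
        rw [← mul_pow]; congr 1; ring
      calc (a/s)^n ≤ ((a/s)^2)^n := hstep
        _ = 8^n * ((a/s)^2/8)^n := h8
        _ ≤ 8^n * ((Nat.factorial n : ℝ) * Real.exp ((a/s)^2/8)) := by
            have := pow_le_fact_mul_exp n hw0
            have h8p : (0:ℝ) ≤ (8:ℝ)^n := by positivity
            exact mul_le_mul_of_nonneg_left this h8p
        _ = 8^n * (Nat.factorial n : ℝ) * Real.exp ((a/s)^2/8) := by ring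
    have hkey : (a/s)^n * Real.exp (-((a/s)^2/8)) ≤ 8^n * (Nat.factorial n : ℝ) := by
      rw [Real.exp_neg, ← div_eq_mul_inv, div_le_iff₀ (Real.exp_pos _)]
      linarith [h1n]
    -- split the exponential
    have hsplit : Real.exp (-(a^2/(4*s^2)))
        = Real.exp (-((a/s)^2/8)) * Real.exp (-(a^2/(8*s^2))) := by
      rw [← Real.exp_add]; congr 1; field_simp; ring
    have hmono : Real.exp (-(a^2/(8*s^2))) ≤ Real.exp (-(a^2/(8*ρ^2))) := by
      apply Real.exp_le_exp.mpr
      have : a^2/(8*ρ^2) ≤ a^2/(8*s^2) := by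
        apply div_le_div_of_nonneg_left (by positivity) (by positivity)
        nlinarith
      linarith
    have hfac : (s^n)⁻¹ = (a/s)^n * (a^n)⁻¹ := by
      rw [div_pow]; field_simp
    rw [hrw] at hrw -- no-op
    calc (s^n)⁻¹ * Real.exp (-(a^2/(4*s^2)))
        = ((a/s)^n * Real.exp (-((a/s)^2/8))) * ((a^n)⁻¹ * Real.exp (-(a^2/(8*s^2)))) := by
          rw [hsplit, hfac]; ring
      _ ≤ (8^n * (Nat.factorial n : ℝ)) * ((a^n)⁻¹ * Real.exp (-(a^2/(8*ρ^2)))) := by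
          apply mul_le_mul hkey
          · apply mul_le_mul_of_nonneg_left hmono (by positivity)
          · positivity
          · nlinarith
      _ ≤ (8^n * (Nat.factorial n : ℝ)) * (((2:ℝ)^n)^(k+1) * Real.exp (-(a^2/(8*ρ^2)))) := by
          apply mul_le_mul_of_nonneg_left _ (by positivity)
          exact mul_le_mul_of_nonneg_right han (Real.exp_pos _).le
      _ ≤ (8^n * (Nat.factorial n : ℝ) * Real.exp (1/8)) * ((2:ℝ)^n)^(k+1)
            * Real.exp (-(a^2/(8*ρ^2))) := by
          have hE : (1:ℝ) ≤ Real.exp (1/8) := by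
            linarith [Real.add_one_le_exp (1/8:ℝ)]
          have hpos : (0:ℝ) ≤ (8^n * (Nat.factorial n : ℝ)) * (((2:ℝ)^n)^(k+1) * Real.exp (-(a^2/(8*ρ^2)))) := by positivity
          calc (8^n * (Nat.factorial n : ℝ)) * (((2:ℝ)^n)^(k+1) * Real.exp (-(a^2/(8*ρ^2))))
              = ((8^n * (Nat.factorial n : ℝ)) * (((2:ℝ)^n)^(k+1) * Real.exp (-(a^2/(8*ρ^2))))) * 1 := by ring
            _ ≤ ((8^n * (Nat.factorial n : ℝ)) * (((2:ℝ)^n)^(k+1) * Real.exp (-(a^2/(8*ρ^2))))) * Real.exp (1/8) := by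
                exact mul_le_mul_of_nonneg_left hE hpos
            _ = (8^n * (Nat.factorial n : ℝ) * Real.exp (1/8)) * ((2:ℝ)^n)^(k+1)
                  * Real.exp (-(a^2/(8*ρ^2))) := by ring

lemma exp_neg_half_sq {u : ℝ} (hu : 0 ≤ u) : Real.exp (-(u/2)) * u^2 ≤ 8 := by
  have h := sq_div_two_le_exp (z := u/2) (by linarith)
  have he : Real.exp (-(u/2)) = (Real.exp (u/2))⁻¹ := Real.exp_neg _
  have hep : (0:ℝ) < Real.exp (u/2) := Real.exp_pos _
  rw [he]
  rw [inv_mul_le_iff₀ hep]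
  nlinarith [h]

lemma EM1 (k : ℕ) {ρ : ℝ} (hρ : 0 < ρ) :
    (1/4:ℝ)^k * (if 2*ρ ≤ (1/2:ℝ)^k then Real.exp (-((1/4:ℝ)^k / (32*ρ^2))) else 1)
      ≤ min ((1/4:ℝ)^k) (8192*ρ^4*4^k) := by
  have hq : (0:ℝ) < (1/4:ℝ)^k := by positivity
  have hQ : (1/4:ℝ)^k * (4:ℝ)^k = 1 := by rw [← mul_pow]; norm_num
  split_ifs with hif
  · set u : ℝ := (1/4:ℝ)^k / (32*ρ^2) with hu
    have hu0 : 0 < u := by positivity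
    refine le_min ?_ ?_
    · have : Real.exp (-u) ≤ 1 := Real.exp_le_one_iff.mpr (by linarith)
      nlinarith
    · have h1 : Real.exp (-u) ≤ Real.exp (-(u/2)) := Real.exp_le_exp.mpr (by linarith)
      have h2 := exp_neg_half_sq hu0.le
      -- (1/4)^k * exp(-(u/2)) ≤ 8192 ρ^4 4^k
      have h3 : (1/4:ℝ)^k = u * (32*ρ^2) := by rw [hu]; field_simp
      have h4 : (1/4:ℝ)^k * Real.exp (-(u/2)) ≤ 8192*ρ^4*4^k := by
        have hx : Real.exp (-(u/2)) ≤ 8 / u^2 := by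
          rw [le_div_iff₀ (by positivity)]
          linarith [h2]
        have h1q : (4:ℝ)^k = 1/((1/4:ℝ)^k) := eq_one_div_of_mul_eq_one_left (by linarith [hQ])
        calc (1/4:ℝ)^k * Real.exp (-(u/2)) ≤ (1/4:ℝ)^k * (8/u^2) := by
              exact mul_le_mul_of_nonneg_left hx hq.le
          _ = 8192*ρ^4*(1/((1/4:ℝ)^k)) := by
              rw [hu]; field_simp; ring
          _ = 8192*ρ^4*4^k := by rw [h1q]
      calc (1/4:ℝ)^k * Real.exp (-u) ≤ (1/4:ℝ)^k * Real.exp (-(u/2)) := by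
            exact mul_le_mul_of_nonneg_left h1 hq.le
        _ ≤ 8192*ρ^4*4^k := h4
  · push_neg at hif
    have hq4 : (1/4:ℝ)^k < 4*ρ^2 := by
      have : ((1/2:ℝ)^k)^2 < (2*ρ)^2 := by
        apply sq_lt_sq' _ hif
        nlinarith [pow_pos (show (0:ℝ) < 1/2 by norm_num) k]
      calc (1/4:ℝ)^k = ((1/2:ℝ)^2)^k := by norm_num
        _ = ((1/2:ℝ)^k)^2 := by rw [← pow_mul, mul_comm, pow_mul]
        _ < (2*ρ)^2 := this
        _ = 4*ρ^2 := by ring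
    rw [mul_one]
    refine le_min le_rfl ?_
    -- (1/4)^k ≤ 8192 ρ^4 4^k  from (1/4)^k < 4ρ²
    have : (1/4:ℝ)^k * (1/4:ℝ)^k ≤ 16 * ρ^4 := by nlinarith
    nlinarith [hQ, hq, pow_pos (show (0:ℝ) < 4 by norm_num) k]

lemma EM2 (k : ℕ) {ρ r : ℝ} (hρ : 0 < ρ) (hρr : ρ ≤ r) (hr1 : r ≤ 1)
    (h : Real.sqrt r < min 1 (2*(1/2:ℝ)^k)) :
    (1/4:ℝ)^k * (if 2*ρ ≤ (1/2:ℝ)^k then Real.exp (-((1/4:ℝ)^k / (32*ρ^2))) else 1)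
      ≤ Real.exp (1/16) * Real.exp (-1/(256*r)) * min ((1/4:ℝ)^k) (8192*ρ^4*4^k) := by
  have hr0 : (0:ℝ) < r := lt_of_lt_of_le hρ hρr
  have hq : (0:ℝ) < (1/4:ℝ)^k := by positivity
  have hQ : (1/4:ℝ)^k * (4:ℝ)^k = 1 := by rw [← mul_pow]; norm_num
  have hsq : Real.sqrt r < 2*(1/2:ℝ)^k := lt_of_lt_of_le h (min_le_right _ _)
  have hr4 : r < 4 * (1/4:ℝ)^k := by
    have h1 : Real.sqrt r * Real.sqrt r < (2*(1/2:ℝ)^k) * (2*(1/2:ℝ)^k) := by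
      apply mul_self_lt_mul_self (Real.sqrt_nonneg r) hsq
    rw [Real.mul_self_sqrt hr0.le] at h1
    have h2 : (2*(1/2:ℝ)^k) * (2*(1/2:ℝ)^k) = 4 * (1/4:ℝ)^k := by
      have : ((1/2:ℝ)^k) * ((1/2:ℝ)^k) = (1/4:ℝ)^k := by
        rw [← mul_pow]; norm_num
      nlinarith [this]
    linarith
  have hE16 : (1:ℝ) ≤ Real.exp (1/16) := by linarith [Real.add_one_le_exp (1/16:ℝ)]
  split_ifs with hif
  · -- Gaussian regime
    set u : ℝ := (1/4:ℝ)^k / (32*ρ^2) with hu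
    have hu0 : 0 < u := by positivity
    -- exp(-(u/2)) ≤ exp(-1/(256 r))
    have hhalf : Real.exp (-(u/2)) ≤ Real.exp (-1/(256*r)) := by
      apply Real.exp_le_exp.mpr
      have h1 : r/(256*ρ^2) ≤ u/2 := by
        rw [hu]
        rw [div_le_div_iff₀ (by positivity) (by norm_num : (0:ℝ) < 2)]
        -- r * 2 ≤ (1/4)^k/(32ρ²) ... clear denominators
        have : r ≤ 4*(1/4:ℝ)^k := hr4.le
        have hρ2 : (0:ℝ) < ρ^2 := by positivity
        rw [div_mul_eq_mul_div, le_div_iff₀ (by positivity)]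
        nlinarith
      have h2 : 1/(256*r) ≤ r/(256*ρ^2) := by
        rw [div_le_div_iff₀ (by positivity) (by positivity)]
        nlinarith
      have h3 := h2.trans h1
      have hng : -1/(256*r) = -(1/(256*r)) := by ring
      rw [hng]
      linarith
    have hEu : Real.exp (-u) ≤ Real.exp (-(u/2)) * Real.exp (-(u/2)) := by
      rw [← Real.exp_add]
      apply Real.exp_le_exp.mpr; linarith
    have hb2 : (1/4:ℝ)^k * Real.exp (-(u/2)) ≤ 8192*ρ^4*4^k := by
      have hx : Real.exp (-(u/2)) ≤ 8 / u^2 := by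
        rw [le_div_iff₀ (by positivity)]
        linarith [exp_neg_half_sq hu0.le]
      have h1q : (4:ℝ)^k = 1/((1/4:ℝ)^k) := eq_one_div_of_mul_eq_one_left (by linarith [hQ])
      calc (1/4:ℝ)^k * Real.exp (-(u/2)) ≤ (1/4:ℝ)^k * (8/u^2) :=
            mul_le_mul_of_nonneg_left hx hq.le
        _ = 8192*ρ^4*(1/((1/4:ℝ)^k)) := by rw [hu]; field_simp; ring
        _ = 8192*ρ^4*4^k := by rw [h1q]
    have hcomb : Real.exp (-u) ≤ Real.exp (-(u/2)) * Real.exp (-1/(256*r)) := by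
      calc Real.exp (-u) ≤ Real.exp (-(u/2)) * Real.exp (-(u/2)) := hEu
        _ ≤ Real.exp (-(u/2)) * Real.exp (-1/(256*r)) :=
            mul_le_mul_of_nonneg_left hhalf (Real.exp_pos _).le
    rcases le_total ((1/4:ℝ)^k) (8192*ρ^4*4^k) with hm | hm
    · rw [min_eq_left hm]
      have h1 : Real.exp (-u) ≤ Real.exp (-1/(256*r)) := by
        calc Real.exp (-u) ≤ Real.exp (-(u/2)) := Real.exp_le_exp.mpr (by linarith)
          _ ≤ Real.exp (-1/(256*r)) := hhalf
      calc (1/4:ℝ)^k * Real.exp (-u) ≤ (1/4:ℝ)^k * Real.exp (-1/(256*r)) :=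
            mul_le_mul_of_nonneg_left h1 hq.le
        _ = 1 * (Real.exp (-1/(256*r)) * (1/4:ℝ)^k) := by ring
        _ ≤ Real.exp (1/16) * (Real.exp (-1/(256*r)) * (1/4:ℝ)^k) := by
            apply mul_le_mul_of_nonneg_right hE16 (by positivity)
        _ = Real.exp (1/16) * Real.exp (-1/(256*r)) * (1/4:ℝ)^k := by ring
    · rw [min_eq_right hm]
      calc (1/4:ℝ)^k * Real.exp (-u)
          ≤ (1/4:ℝ)^k * (Real.exp (-(u/2)) * Real.exp (-1/(256*r))) :=
            mul_le_mul_of_nonneg_left hcomb hq.le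
        _ = ((1/4:ℝ)^k * Real.exp (-(u/2))) * Real.exp (-1/(256*r)) := by ring
        _ ≤ (8192*ρ^4*4^k) * Real.exp (-1/(256*r)) :=
            mul_le_mul_of_nonneg_right hb2 (Real.exp_pos _).le
        _ = 1 * (Real.exp (-1/(256*r)) * (8192*ρ^4*4^k)) := by ring
        _ ≤ Real.exp (1/16) * (Real.exp (-1/(256*r)) * (8192*ρ^4*4^k)) := by
            apply mul_le_mul_of_nonneg_right hE16 (by positivity)
        _ = Real.exp (1/16) * Real.exp (-1/(256*r)) * (8192*ρ^4*4^k) := by ring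
  · -- small-scale regime: no Gaussian factor needed
    push_neg at hif
    rw [mul_one]
    have hq4 : (1/4:ℝ)^k < 4*ρ^2 := by
      have h1 : ((1/2:ℝ)^k)^2 < (2*ρ)^2 := by
        apply sq_lt_sq' _ hif
        nlinarith [pow_pos (show (0:ℝ) < 1/2 by norm_num) k]
      calc (1/4:ℝ)^k = ((1/2:ℝ)^2)^k := by norm_num
        _ = ((1/2:ℝ)^k)^2 := by rw [← pow_mul, mul_comm, pow_mul]
        _ < (2*ρ)^2 := h1
        _ = 4*ρ^2 := by ring
    have hr16 : 1 < 16 * r := by nlinarith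
    have hone : (1:ℝ) ≤ Real.exp (1/16) * Real.exp (-1/(256*r)) := by
      rw [← Real.exp_add]
      have harg : (0:ℝ) ≤ 1/16 + -1/(256*r) := by
        rw [div_add_div _ _ (by norm_num) (by positivity)]
        apply div_nonneg _ (by positivity)
        nlinarith
      linarith [Real.add_one_le_exp (1/16 + -1/(256*r))]
    have hmq : (1/4:ℝ)^k ≤ 8192*ρ^4*4^k := by
      have h1 : (1/4:ℝ)^k * (1/4:ℝ)^k ≤ 16 * ρ^4 := by nlinarith
      nlinarith [hQ, hq, pow_pos (show (0:ℝ) < 4 by norm_num) k]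
    rw [min_eq_left hmq]
    calc (1/4:ℝ)^k = 1 * (1/4:ℝ)^k := by ring
      _ ≤ (Real.exp (1/16) * Real.exp (-1/(256*r))) * (1/4:ℝ)^k :=
          mul_le_mul_of_nonneg_right hone hq.le
      _ = Real.exp (1/16) * Real.exp (-1/(256*r)) * (1/4:ℝ)^k := by ring

lemma real_sum_min_bound {ρ : ℝ} (h0 : 0 < ρ) (h1 : ρ ≤ 1) (N : ℕ) :
    (∑ i ∈ Finset.range N, (min ((1/4:ℝ)^i) (8192*ρ^4*4^i))) ≤ 3000 * ρ^2 := by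
  obtain ⟨k0, hlow, dhigh⟩ := exists_dyadic_sq h0 h1
  set N' := max N k0 with hN'
  have hsub : Finset.range N ⊆ Finset.range N' := by
    apply Finset.range_subset_range.mpr (le_max_left _ _)
  have hmono : (∑ i ∈ Finset.range N, (min ((1/4:ℝ)^i) (8192*ρ^4*4^i)))
      ≤ ∑ i ∈ Finset.range N', (min ((1/4:ℝ)^i) (8192*ρ^4*4^i)) := by
    apply Finset.sum_le_sum_of_subset_of_nonneg hsub
    intro i _ _
    positivity
  refine hmono.trans ?_
  rw [← Finset.sum_filter_add_sum_filter_not (Finset.range N') (fun i => i < k0)]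
  have hS1 : (∑ i ∈ (Finset.range N').filter (fun i => i < k0),
      (min ((1/4:ℝ)^i) (8192*ρ^4*4^i))) ≤ (8192/3) * ρ^2 := by
    have h1' : (∑ i ∈ (Finset.range N').filter (fun i => i < k0),
        (min ((1/4:ℝ)^i) (8192*ρ^4*4^i)))
        ≤ ∑ i ∈ (Finset.range N').filter (fun i => i < k0), 8192*ρ^4*4^i :=
      Finset.sum_le_sum fun i _ => min_le_right _ _
    have h2' : (∑ i ∈ (Finset.range N').filter (fun i => i < k0), (8192*ρ^4*(4:ℝ)^i))
        ≤ ∑ i ∈ Finset.range k0, 8192*ρ^4*(4:ℝ)^i := by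
      apply Finset.sum_le_sum_of_subset_of_nonneg
      · intro i hi
        simp only [Finset.mem_filter, Finset.mem_range] at hi ⊢
        exact hi.2
      · intro i _ _; positivity
    have hgeom : (∑ i ∈ Finset.range k0, (4:ℝ)^i) = ((4:ℝ)^k0 - 1)/3 := by
      rw [geom_sum_eq (by norm_num)]; norm_num
    have h3' : (∑ i ∈ Finset.range k0, 8192*ρ^4*(4:ℝ)^i) = 8192*ρ^4*(((4:ℝ)^k0-1)/3) := by
      rw [← Finset.mul_sum, hgeom]
    have hq : (1/4:ℝ)^k0 * (4:ℝ)^k0 = 1 := by rw [← mul_pow]; norm_num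
    have h4pos : (0:ℝ) < (4:ℝ)^k0 := by positivity
    have key : ρ^2 * (4:ℝ)^k0 ≤ 1 := by
      calc ρ^2 * (4:ℝ)^k0 ≤ (1/4:ℝ)^k0 * (4:ℝ)^k0 :=
            mul_le_mul_of_nonneg_right hlow h4pos.le
        _ = 1 := hq
    have h4' : 8192*ρ^4*(((4:ℝ)^k0-1)/3) ≤ (8192/3) * ρ^2 := by
      nlinarith [pow_pos h0 2, pow_pos h0 4]
    linarith [h1'.trans (h2'.trans_eq h3'), h4']
  have hS2 : (∑ i ∈ (Finset.range N').filter (fun i => ¬ i < k0),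
      (min ((1/4:ℝ)^i) (8192*ρ^4*4^i))) ≤ (16/3) * ρ^2 := by
    have h1' : (∑ i ∈ (Finset.range N').filter (fun i => ¬ i < k0),
        (min ((1/4:ℝ)^i) (8192*ρ^4*4^i)))
        ≤ ∑ i ∈ (Finset.range N').filter (fun i => ¬ i < k0), (1/4:ℝ)^i :=
      Finset.sum_le_sum fun i _ => min_le_left _ _
    have h2' : (∑ i ∈ (Finset.range N').filter (fun i => ¬ i < k0), (1/4:ℝ)^i)
        ≤ ∑ i ∈ Finset.Ico k0 N', (1/4:ℝ)^i := by
      apply Finset.sum_le_sum_of_subset_of_nonneg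
      · intro i hi
        simp only [Finset.mem_filter, Finset.mem_range, Finset.mem_Ico, not_lt] at hi ⊢
        exact ⟨hi.2, hi.1⟩
      · intro i _ _; positivity
    have hk0N : k0 ≤ N' := le_max_right _ _
    have hgeom : (∑ i ∈ Finset.Ico k0 N', (1/4:ℝ)^i)
        = ((1/4:ℝ)^N' - (1/4:ℝ)^k0)/((1/4:ℝ) - 1) := geom_sum_Ico (by norm_num) hk0N
    have h3' : ((1/4:ℝ)^N' - (1/4:ℝ)^k0)/((1/4:ℝ) - 1) ≤ (4/3) * (1/4:ℝ)^k0 := by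
      have hpN : (0:ℝ) ≤ (1/4:ℝ)^N' := by positivity
      rw [div_le_iff_of_neg (by norm_num)]
      nlinarith
    have h4' : (4/3) * (1/4:ℝ)^k0 ≤ (16/3) * ρ^2 := by nlinarith
    linarith [h1'.trans ((h2'.trans_eq hgeom).trans (h3'.trans h4'))]
  nlinarith [hS1, hS2, sq_nonneg ρ]

lemma tsum_min_bound {ρ : ℝ} (h0 : 0 < ρ) (h1 : ρ ≤ 1) :
    (∑' k : ℕ, ENNReal.ofReal (min ((1/4:ℝ)^k) (8192*ρ^4*4^k)))
      ≤ ENNReal.ofReal (3000 * ρ^2) := by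
  apply ENNReal.tsum_le_of_sum_range_le
  intro N
  calc (∑ i ∈ Finset.range N, ENNReal.ofReal (min ((1/4:ℝ)^i) (8192*ρ^4*4^i)))
      = ENNReal.ofReal (∑ i ∈ Finset.range N, (min ((1/4:ℝ)^i) (8192*ρ^4*4^i))) := by
        rw [ENNReal.ofReal_sum_of_nonneg]
        intro i _; positivity
    _ ≤ ENNReal.ofReal (3000 * ρ^2) :=
        ENNReal.ofReal_le_ofReal (real_sum_min_bound h0 h1 N)

lemma per_k_bound (k : ℕ) {ρ r p a b c : ℝ} (hρ : 0 < ρ) (hρr : ρ ≤ r) (hr1 : r ≤ 1)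
    (hp : 1 ≤ p) (ha : 0 ≤ a) (hb : 0 ≤ b) (hc : 0 ≤ c)
    (hab : min 1 (2*(1/2:ℝ)^k) ≤ Real.sqrt r → a ≤ b) (hac : a ≤ c) :
    (1/4:ℝ)^k * (if 2*ρ ≤ (1/2:ℝ)^k then Real.exp (-((1/4:ℝ)^k / (32*ρ^2))) else 1) * a^p
      ≤ min ((1/4:ℝ)^k) (8192*ρ^4*4^k)
        * (b^p + Real.exp (1/16) * Real.exp (-1/(256*r)) * c^p) := by
  have hp0 : (0:ℝ) < p := lt_of_lt_of_le one_pos hp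
  have hap : 0 ≤ a^p := Real.rpow_nonneg ha p
  have hbp : 0 ≤ b^p := Real.rpow_nonneg hb p
  have hcp : 0 ≤ c^p := Real.rpow_nonneg hc p
  have hmin0 : 0 ≤ min ((1/4:ℝ)^k) (8192*ρ^4*4^k) := le_min (by positivity) (by positivity)
  rcases le_or_gt (min 1 (2*(1/2:ℝ)^k)) (Real.sqrt r) with hcase | hcase
  · -- small scale: compare with b = σt(√r)
    have habp : a^p ≤ b^p := Real.rpow_le_rpow ha (hab hcase) hp0.le
    have hE := EM1 k hρ
    calc (1/4:ℝ)^k * (if 2*ρ ≤ (1/2:ℝ)^k then Real.exp (-((1/4:ℝ)^k / (32*ρ^2))) else 1) * a^p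
        ≤ min ((1/4:ℝ)^k) (8192*ρ^4*4^k) * b^p := by
          apply mul_le_mul hE habp hap hmin0
      _ ≤ min ((1/4:ℝ)^k) (8192*ρ^4*4^k)
          * (b^p + Real.exp (1/16) * Real.exp (-1/(256*r)) * c^p) := by
          apply mul_le_mul_of_nonneg_left _ hmin0
          have : 0 ≤ Real.exp (1/16) * Real.exp (-1/(256*r)) * c^p := by positivity
          linarith
  · -- large scale: compare with c = σt(1)
    have hacp : a^p ≤ c^p := Real.rpow_le_rpow ha hac hp0.le
    have hE := EM2 k hρ hρr hr1 hcase
    calc (1/4:ℝ)^k * (if 2*ρ ≤ (1/2:ℝ)^k then Real.exp (-((1/4:ℝ)^k / (32*ρ^2))) else 1) * a^p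
        ≤ (Real.exp (1/16) * Real.exp (-1/(256*r)) * min ((1/4:ℝ)^k) (8192*ρ^4*4^k)) * c^p := by
          apply mul_le_mul hE hacp hap (by positivity)
      _ = min ((1/4:ℝ)^k) (8192*ρ^4*4^k)
          * (Real.exp (1/16) * Real.exp (-1/(256*r)) * c^p) := by ring
      _ ≤ min ((1/4:ℝ)^k) (8192*ρ^4*4^k)
          * (b^p + Real.exp (1/16) * Real.exp (-1/(256*r)) * c^p) := by
          apply mul_le_mul_of_nonneg_left _ hmin0
          linarith

set_option maxHeartbeats 2000000 in
/-- Bound of the Gaussian-weighted modulus of continuity `σ` in terms of the usual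
`L^p` modulus `σ̃` over parabolic cylinders:
`σ(r) ≤ C (σ̃(r) + σ̃(√r) + σ̃(1)e^{-c/r})` for `r ∈ (0,1]`, with constants depending
only on `n` and `p`. -/
theorem modulus_comparison (n : ℕ) (p : ℝ) (hp : 1 ≤ p) (cn : ℝ) (hcn : 0 < cn) :
    ∃ c C : ℝ, 0 < c ∧ 0 < C ∧
      ∀ (f : EuclideanSpace ℝ (Fin n) × ℝ → ℝ) (f0 : ℝ) (σt : ℝ → ℝ),
        IntegrableOn (fun X => |f X - f0| ^ p)
          (Metric.ball (0 : EuclideanSpace ℝ (Fin n)) 1 ×ˢ Ioc (-1:ℝ) 0) →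
        MonotoneOn σt (Ioi (0:ℝ)) →
        (∀ r : ℝ, 0 < r → 0 ≤ σt r) →
        (∀ r : ℝ, 1 ≤ r → σt r = σt 1) →
        (∀ ρ ∈ Ioc (0:ℝ) 1,
          ((volume (Metric.ball (0 : EuclideanSpace ℝ (Fin n)) ρ ×ˢ
              Ioc (-ρ^2) (0:ℝ))).toReal⁻¹ *
            ∫ X in Metric.ball (0 : EuclideanSpace ℝ (Fin n)) ρ ×ˢ Ioc (-ρ^2) (0:ℝ),
              |f X - f0| ^ p) ^ (1/p) ≤ σt ρ) →
        ∀ r ∈ Ioc (0:ℝ) 1, ∀ ρ ∈ Ioc (0:ℝ) r,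
          ((1 / ρ ^ 2) *
            ∫ X in Metric.ball (0 : EuclideanSpace ℝ (Fin n)) 1 ×ˢ Ioc (-ρ^2) (0:ℝ),
              |f X - f0| ^ p *
                (cn * (-X.2) ^ (-(n:ℝ)/2) * Real.exp (‖X.1‖ ^ 2 / (4 * X.2)))) ^ (1/p)
            ≤ C * (σt r + σt (Real.sqrt r) + σt 1 * Real.exp (-c / r)) := by
  have hp0 : (0:ℝ) < p := lt_of_lt_of_le one_pos hp
  set E := EuclideanSpace ℝ (Fin n)
  set Cn : ℝ := 8^n * (Nat.factorial n : ℝ) * Real.exp (1/8) with hCn_def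
  have hCn : 0 < Cn := by
    have : (0:ℝ) < (Nat.factorial n : ℝ) := by exact_mod_cast Nat.factorial_pos n
    positivity
  set V1 : ℝ := (volume (Metric.ball (0 : E) 1)).toReal with hV1_def
  have hV1 : 0 < V1 := by
    apply ENNReal.toReal_pos
    · exact (Metric.measure_ball_pos volume (0:E) one_pos).ne'
    · exact measure_ball_lt_top.ne
  set K0 : ℝ := cn * Cn * V1 * 2^(2*n+2) with hK0_def
  have hK0 : 0 < K0 := by positivity
  refine ⟨1/(256*p), (3000 * K0 * Real.exp (1/16)) ^ (1/p), by positivity, by positivity,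
    ?_⟩
  intro f f0 σt hInt hmono hσnn hσone hcyl r hr ρ hρ
  obtain ⟨hr0, hr1⟩ := hr
  obtain ⟨hρ0, hρr⟩ := hρ
  have hρ1 : ρ ≤ 1 := hρr.trans hr1
  -- notation
  set g : E × ℝ → ℝ := fun X => |f X - f0| ^ p *
    (cn * (-X.2) ^ (-(n:ℝ)/2) * Real.exp (‖X.1‖ ^ 2 / (4 * X.2))) with hg_def
  set h : E × ℝ → ℝ := fun X => |f X - f0| ^ p with hh_def
  have hh_nonneg : ∀ X, 0 ≤ h X := fun X => Real.rpow_nonneg (abs_nonneg _) p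
  set D : Set (E × ℝ) := Metric.ball (0 : E) 1 ×ˢ Ioc (-ρ^2) 0 with hD_def
  set D' : Set (E × ℝ) := Metric.ball (0 : E) 1 ×ˢ Ioo (-ρ^2) 0 with hD'_def
  set Mx : E × ℝ → ℝ := fun X => max ‖X.1‖ (Real.sqrt (-X.2)) with hMx_def
  set R : ℕ → Set (E × ℝ) := fun k => D' ∩ Mx ⁻¹' (Ioc ((1/2:ℝ)^(k+1)) ((1/2:ℝ)^k))
    with hR_def
  set sk : ℕ → ℝ := fun k => min 1 (2*(1/2:ℝ)^k) with hsk_def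
  set Ek : ℕ → ℝ := fun k =>
    if 2*ρ ≤ (1/2:ℝ)^k then Real.exp (-((1/4:ℝ)^k / (32*ρ^2))) else 1 with hEk_def
  set mk : ℕ → ℝ := fun k => min ((1/4:ℝ)^k) (8192*ρ^4*4^k) with hmk_def
  set Θ : ℝ := K0 * ((σt (Real.sqrt r))^p
    + Real.exp (1/16) * Real.exp (-1/(256*r)) * (σt 1)^p) with hΘ_def
  have hσr : 0 ≤ σt r := hσnn r hr0
  have hσsr : 0 ≤ σt (Real.sqrt r) := hσnn _ (Real.sqrt_pos.mpr hr0)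
  have hσ1 : 0 ≤ σt 1 := hσnn 1 one_pos
  have hΘ0 : 0 ≤ Θ := by
    apply mul_nonneg hK0.le
    have h1 : 0 ≤ (σt (Real.sqrt r))^p := Real.rpow_nonneg hσsr p
    have h2 : 0 ≤ (σt 1)^p := Real.rpow_nonneg hσ1 p
    positivity
  -- basic properties of sk
  have hsk_pos : ∀ k, 0 < sk k := fun k => lt_min one_pos (by positivity)
  have hsk_le1 : ∀ k, sk k ≤ 1 := fun k => min_le_left _ _
  -- Step A : cylinder integral bounds from the hypothesis
  have hQsub : ∀ k : ℕ, (Metric.ball (0 : E) (sk k) ×ˢ Ioc (-(sk k)^2) (0:ℝ))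
      ⊆ Metric.ball (0 : E) 1 ×ˢ Ioc (-1:ℝ) 0 := by
    intro k X hX
    obtain ⟨hX1, hX2⟩ := hX
    constructor
    · exact Metric.ball_subset_ball (hsk_le1 k) hX1
    · refine ⟨lt_of_le_of_lt ?_ hX2.1, hX2.2⟩
      have := hsk_pos k
      nlinarith [hsk_le1 k, hsk_pos k]
  have hIntk : ∀ k : ℕ, IntegrableOn h
      (Metric.ball (0 : E) (sk k) ×ˢ Ioc (-(sk k)^2) (0:ℝ)) := by
    intro k
    exact hInt.mono_set (hQsub k)
  have hvolQ : ∀ k : ℕ, (volume (Metric.ball (0 : E) (sk k) ×ˢ Ioc (-(sk k)^2) (0:ℝ))).toReal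
      = (sk k)^n * V1 * (sk k)^2 := by
    intro k
    rw [show (volume : Measure (E × ℝ)) = (volume : Measure E).prod volume from
      MeasureTheory.Measure.volume_eq_prod E ℝ, Measure.prod_prod, Real.volume_Ioc,
      euclidean_ball_vol n (hsk_pos k)]
    rw [ENNReal.toReal_mul, ENNReal.toReal_mul, ENNReal.toReal_ofReal (by positivity),
      ENNReal.toReal_ofReal (by nlinarith [hsk_pos k])]
    rw [← hV1_def]
    have : (0:ℝ) - -(sk k)^2 = (sk k)^2 := by ring
    rw [this]
  have hcylB : ∀ k : ℕ, (∫ X in Metric.ball (0 : E) (sk k) ×ˢ Ioc (-(sk k)^2) (0:ℝ), h X)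
      ≤ ((sk k)^n * V1 * (sk k)^2) * (σt (sk k))^p := by
    intro k
    have hs0 := hsk_pos k
    have hs1 := hsk_le1 k
    have hc := hcyl (sk k) ⟨hs0, hs1⟩
    set V : ℝ := (volume (Metric.ball (0 : E) (sk k) ×ˢ Ioc (-(sk k)^2) (0:ℝ))).toReal with hV_def
    have hVeq : V = (sk k)^n * V1 * (sk k)^2 := hvolQ k
    have hVpos : 0 < V := by rw [hVeq]; positivity
    have hint0 : 0 ≤ ∫ X in Metric.ball (0 : E) (sk k) ×ˢ Ioc (-(sk k)^2) (0:ℝ), h X :=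
      integral_nonneg hh_nonneg
    have h1 : 0 ≤ V⁻¹ * ∫ X in Metric.ball (0 : E) (sk k) ×ˢ Ioc (-(sk k)^2) (0:ℝ), h X :=
      mul_nonneg (inv_nonneg.mpr hVpos.le) hint0
    have h2 : V⁻¹ * (∫ X in Metric.ball (0 : E) (sk k) ×ˢ Ioc (-(sk k)^2) (0:ℝ), h X)
        ≤ (σt (sk k))^p := by
      have h3 : ((V⁻¹ * ∫ X in Metric.ball (0 : E) (sk k) ×ˢ Ioc (-(sk k)^2) (0:ℝ), h X) ^ (1/p)) ^ p
          ≤ (σt (sk k))^p :=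
        Real.rpow_le_rpow (Real.rpow_nonneg h1 _) hc hp0.le
      calc V⁻¹ * (∫ X in Metric.ball (0 : E) (sk k) ×ˢ Ioc (-(sk k)^2) (0:ℝ), h X)
          = ((V⁻¹ * ∫ X in Metric.ball (0 : E) (sk k) ×ˢ Ioc (-(sk k)^2) (0:ℝ), h X) ^ ((1/p) * p)) := by
            rw [one_div, inv_mul_cancel₀ hp0.ne', Real.rpow_one]
        _ = ((V⁻¹ * ∫ X in Metric.ball (0 : E) (sk k) ×ˢ Ioc (-(sk k)^2) (0:ℝ), h X) ^ (1/p)) ^ p := by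
            rw [Real.rpow_mul h1]
        _ ≤ (σt (sk k))^p := h3
    calc (∫ X in Metric.ball (0 : E) (sk k) ×ˢ Ioc (-(sk k)^2) (0:ℝ), h X)
        = V * (V⁻¹ * ∫ X in Metric.ball (0 : E) (sk k) ×ˢ Ioc (-(sk k)^2) (0:ℝ), h X) := by
          field_simp
      _ ≤ V * (σt (sk k))^p := mul_le_mul_of_nonneg_left h2 hVpos.le
      _ = ((sk k)^n * V1 * (sk k)^2) * (σt (sk k))^p := by rw [hVeq]
  -- Step B : the main lintegral estimate
  have hDmeas : MeasurableSet D := measurableSet_ball.prod measurableSet_Ioc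
  have hg_nonnegD : ∀ X ∈ D, 0 ≤ g X := by
    intro X hX
    have ht : X.2 ≤ 0 := hX.2.2
    have h1 : (0:ℝ) ≤ (-X.2) ^ (-(n:ℝ)/2) := Real.rpow_nonneg (by linarith) _
    have h2 := hh_nonneg X
    have h3 : (0:ℝ) < Real.exp (‖X.1‖ ^ 2 / (4 * X.2)) := Real.exp_pos _
    rw [hg_def]
    positivity
  have hMxcont : Continuous Mx := by
    rw [hMx_def]
    exact Continuous.max (continuous_fst.norm) (Real.continuous_sqrt.comp continuous_snd.neg)
  have hRmeas : ∀ k, MeasurableSet (R k) := by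
    intro k
    rw [hR_def]
    exact (measurableSet_ball.prod measurableSet_Ioo).inter
      (hMxcont.measurable measurableSet_Ioc)
  have hEk_nonneg : ∀ k, 0 ≤ Ek k := by
    intro k
    rw [hEk_def]
    dsimp only
    split_ifs
    · exact (Real.exp_pos _).le
    · exact zero_le_one
  have hmk_nonneg : ∀ k, 0 ≤ mk k := by
    intro k
    rw [hmk_def]
    exact le_min (by positivity) (by positivity)
  have hptwise : ∀ k : ℕ, ∀ X ∈ R k, g X ≤ (cn * Cn * ((2:ℝ)^n)^(k+1) * Ek k) * h X := by
    intro k X hX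
    rw [hR_def] at hX
    obtain ⟨⟨hx1, hx2⟩, hxM⟩ := hX
    simp only [hMx_def, mem_preimage, mem_Ioc] at hxM
    have ht0 : X.2 < 0 := hx2.2
    have htρ : -ρ^2 < X.2 := hx2.1
    have hs0 : 0 < Real.sqrt (-X.2) := Real.sqrt_pos.mpr (by linarith)
    have hs2 : (Real.sqrt (-X.2))^2 = -X.2 := Real.sq_sqrt (by linarith)
    have hsρ : Real.sqrt (-X.2) < ρ := by
      calc Real.sqrt (-X.2) < Real.sqrt (ρ^2) := Real.sqrt_lt_sqrt (by linarith) (by linarith)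
        _ = ρ := Real.sqrt_sq hρ0.le
    have hXt : X.2 = -(Real.sqrt (-X.2))^2 := by linarith
    have hwp := weight_pointwise n k hρ0 hs0 hsρ (norm_nonneg X.1) hxM.1 hxM.2
    have hEkb : Real.exp (-(‖X.1‖^2/(8*ρ^2))) ≤ Ek k := by
      rw [hEk_def]
      dsimp only
      split_ifs with hif
      · have hbk : ρ ≤ (1/2:ℝ)^(k+1) := by
          have hps : (1/2:ℝ)^(k+1) = (1/2)*(1/2:ℝ)^k := by rw [pow_succ]; ring
          rw [hps]; linarith
        have haM : (1/2:ℝ)^(k+1) < ‖X.1‖ := by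
          by_contra hcon
          push_neg at hcon
          have hcon2 : max ‖X.1‖ (Real.sqrt (-X.2)) ≤ (1/2:ℝ)^(k+1) :=
            max_le hcon (by linarith)
          exact absurd hxM.1 (not_lt.mpr hcon2)
        apply Real.exp_le_exp.mpr
        have h14 : ((1/2:ℝ)^(k+1))^2 = (1/4:ℝ)^(k+1) := by
          rw [← pow_mul, mul_comm, pow_mul]; norm_num
        have ha2 : (1/4:ℝ)^(k+1) ≤ ‖X.1‖^2 := by
          rw [← h14]
          nlinarith [pow_pos (show (0:ℝ)<1/2 by norm_num) (k+1)]
        have h4 : (1/4:ℝ)^(k+1) = (1/4:ℝ)^k/4 := by rw [pow_succ]; ring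
        have hdd : (1/4:ℝ)^k/(32*ρ^2) ≤ ‖X.1‖^2/(8*ρ^2) := by
          rw [div_le_div_iff₀ (by positivity) (by positivity)]
          nlinarith [ha2, h4]
        linarith
      · exact Real.exp_le_one_iff.mpr (neg_nonpos.mpr (by positivity))
    have hwt : cn * (-X.2) ^ (-(n:ℝ)/2) * Real.exp (‖X.1‖^2/(4*X.2))
        ≤ cn * Cn * ((2:ℝ)^n)^(k+1) * Ek k := by
      have he : ‖X.1‖^2/(4*X.2) = -(‖X.1‖^2/(4*(Real.sqrt (-X.2))^2)) := by
        rw [hs2]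
        have hx2ne : X.2 ≠ 0 := ht0.ne
        field_simp
      have hb : (-X.2 : ℝ) ^ (-(n:ℝ)/2) = (((Real.sqrt (-X.2))^2:ℝ)) ^ (-(n:ℝ)/2) := by
        rw [hs2]
      rw [he, hb]
      calc cn * ((Real.sqrt (-X.2))^2:ℝ) ^ (-(n:ℝ)/2)
            * Real.exp (-(‖X.1‖^2/(4*(Real.sqrt (-X.2))^2)))
          = cn * (((Real.sqrt (-X.2))^2:ℝ) ^ (-(n:ℝ)/2)
            * Real.exp (-(‖X.1‖^2/(4*(Real.sqrt (-X.2))^2)))) := by ring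
        _ ≤ cn * ((8^n * (Nat.factorial n : ℝ) * Real.exp (1/8)) * ((2:ℝ)^n)^(k+1)
            * Real.exp (-(‖X.1‖^2/(8*ρ^2)))) := mul_le_mul_of_nonneg_left hwp hcn.le
        _ = (cn * Cn * ((2:ℝ)^n)^(k+1)) * Real.exp (-(‖X.1‖^2/(8*ρ^2))) := by
            rw [hCn_def]; ring
        _ ≤ (cn * Cn * ((2:ℝ)^n)^(k+1)) * Ek k := by
            apply mul_le_mul_of_nonneg_left hEkb
            positivity
        _ = cn * Cn * ((2:ℝ)^n)^(k+1) * Ek k := by ring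
    calc g X = h X * (cn * (-X.2) ^ (-(n:ℝ)/2) * Real.exp (‖X.1‖^2/(4*X.2))) := rfl
      _ ≤ h X * (cn * Cn * ((2:ℝ)^n)^(k+1) * Ek k) :=
          mul_le_mul_of_nonneg_left hwt (hh_nonneg X)
      _ = (cn * Cn * ((2:ℝ)^n)^(k+1) * Ek k) * h X := by ring
  have hrealk : ∀ k : ℕ, (cn * Cn * ((2:ℝ)^n)^(k+1) * Ek k)
      * ((((sk k)^n * V1 * (sk k)^2)) * (σt (sk k))^p) ≤ mk k * Θ := by
    intro k
    have hEk := hEk_nonneg k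
    have hσsk : 0 ≤ σt (sk k) := hσnn _ (hsk_pos k)
    have hskp : 0 ≤ (σt (sk k))^p := Real.rpow_nonneg hσsk p
    have hcoef : ((2:ℝ)^n)^(k+1) * ((sk k)^n * (sk k)^2) ≤ 2^(2*n+2) * (1/4:ℝ)^k := by
      have hsk2 : sk k ≤ 2*(1/2:ℝ)^k := min_le_right _ _
      have hpos0 : (0:ℝ) ≤ sk k := (hsk_pos k).le
      have step : ((2:ℝ)^n)^(k+1) * ((sk k)^n * (sk k)^2)
          ≤ ((2:ℝ)^n)^(k+1) * ((2*(1/2:ℝ)^k)^n * (2*(1/2:ℝ)^k)^2) := by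
        apply mul_le_mul_of_nonneg_left _ (by positivity)
        exact mul_le_mul (pow_le_pow_left₀ hpos0 hsk2 n) (pow_le_pow_left₀ hpos0 hsk2 2)
          (by positivity) (by positivity)
      refine step.trans_eq ?_
      have e2 : ((1/2:ℝ)^k)^2 = (1/4:ℝ)^k := by rw [← pow_mul, mul_comm, pow_mul]; norm_num
      have e4 : (1/2:ℝ)^k = ((2:ℝ)^k)⁻¹ := by rw [← inv_pow]; norm_num
      have e5 : (1/4:ℝ)^k = (((2:ℝ)^k)⁻¹)^2 := by rw [← e2, e4]
      rw [e4, e5]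
      have h2k : (0:ℝ) < (2:ℝ)^k := by positivity
      field_simp
      have hne : (2:ℝ) ^ (n * k) ≠ 0 := by positivity
      rw [div_pow, ← pow_mul, ← pow_mul, mul_comm k n, div_eq_mul_inv]
      linear_combination (2 ^ n * 2 ^ 2 * 2 ^ n) * mul_inv_cancel₀ hne
    have hperk := per_k_bound (ρ := ρ) (r := r) (p := p) (a := σt (sk k))
      (b := σt (Real.sqrt r)) (c := σt 1) k hρ0 hρr hr1 hp hσsk hσsr hσ1
      (fun hle => hmono (mem_Ioi.mpr (hsk_pos k)) (mem_Ioi.mpr (Real.sqrt_pos.mpr hr0))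
        (by simpa [hsk_def] using hle))
      (hmono (mem_Ioi.mpr (hsk_pos k)) (mem_Ioi.mpr one_pos) (hsk_le1 k))
    have hperk' : (1/4:ℝ)^k * Ek k * (σt (sk k))^p
        ≤ mk k * ((σt (Real.sqrt r))^p
          + Real.exp (1/16) * Real.exp (-1/(256*r)) * (σt 1)^p) := by
      rw [hEk_def, hmk_def]
      exact hperk
    calc (cn * Cn * ((2:ℝ)^n)^(k+1) * Ek k) * ((((sk k)^n * V1 * (sk k)^2)) * (σt (sk k))^p)
        = (cn*Cn*V1) * (((2:ℝ)^n)^(k+1) * ((sk k)^n * (sk k)^2)) * (Ek k * (σt (sk k))^p) := by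
          ring
      _ ≤ (cn*Cn*V1) * (2^(2*n+2) * (1/4:ℝ)^k) * (Ek k * (σt (sk k))^p) := by
          apply mul_le_mul_of_nonneg_right (mul_le_mul_of_nonneg_left hcoef (by positivity))
            (mul_nonneg hEk hskp)
      _ = K0 * ((1/4:ℝ)^k * Ek k * (σt (sk k))^p) := by rw [hK0_def]; ring
      _ ≤ K0 * (mk k * ((σt (Real.sqrt r))^p
            + Real.exp (1/16) * Real.exp (-1/(256*r)) * (σt 1)^p)) :=
          mul_le_mul_of_nonneg_left hperk' hK0.le
      _ = mk k * Θ := by rw [hΘ_def]; ring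
  have hJk : ∀ k : ℕ, (∫⁻ X in R k, ENNReal.ofReal (g X)) ≤ ENNReal.ofReal (mk k * Θ) := by
    intro k
    have hW0' : (0:ℝ) ≤ cn * Cn * ((2:ℝ)^n)^(k+1) * Ek k :=
      mul_nonneg (by positivity) (hEk_nonneg k)
    have hRQ : R k ⊆ Metric.ball (0:E) (sk k) ×ˢ Ioc (-(sk k)^2) (0:ℝ) := by
      intro X hX
      rw [hR_def] at hX
      obtain ⟨⟨hx1, hx2⟩, hxM⟩ := hX
      simp only [hMx_def, mem_preimage, mem_Ioc] at hxM
      have h1 : ‖X.1‖ ≤ (1/2:ℝ)^k := le_trans (le_max_left _ _) hxM.2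
      have h2 : ‖X.1‖ < 1 := mem_ball_zero_iff.mp hx1
      have hsq : Real.sqrt (-X.2) ≤ (1/2:ℝ)^k := le_trans (le_max_right _ _) hxM.2
      have hs2 : (Real.sqrt (-X.2))^2 = -X.2 := Real.sq_sqrt (by nlinarith [hx2.2])
      have hxt : -X.2 ≤ (1/4:ℝ)^k := by
        have e2 : ((1/2:ℝ)^k)^2 = (1/4:ℝ)^k := by rw [← pow_mul, mul_comm, pow_mul]; norm_num
        nlinarith [Real.sqrt_nonneg (-X.2)]
      have hpk : (0:ℝ) < (1/2:ℝ)^k := by positivity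
      constructor
      · rw [mem_ball_zero_iff, hsk_def]
        exact lt_min h2 (lt_of_le_of_lt h1 (by nlinarith))
      · constructor
        · rw [hsk_def]
          rcases min_cases (1:ℝ) (2*(1/2:ℝ)^k) with ⟨hmeq, _⟩ | ⟨hmeq, _⟩ <;> dsimp only <;>
            rw [hmeq]
          · nlinarith [hx2.1, hρ1, hρ0]
          · have e2 : ((1/2:ℝ)^k)^2 = (1/4:ℝ)^k := by
              rw [← pow_mul, mul_comm, pow_mul]; norm_num
            nlinarith [hx2.2]
        · exact hx2.2.le
    calc (∫⁻ X in R k, ENNReal.ofReal (g X))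
        ≤ ∫⁻ X in R k, ENNReal.ofReal (cn * Cn * ((2:ℝ)^n)^(k+1) * Ek k)
            * ENNReal.ofReal (h X) := by
          apply lintegral_mono_ae
          filter_upwards [ae_restrict_mem (hRmeas k)] with X hX
          rw [← ENNReal.ofReal_mul hW0']
          exact ENNReal.ofReal_le_ofReal (hptwise k X hX)
      _ = ENNReal.ofReal (cn * Cn * ((2:ℝ)^n)^(k+1) * Ek k)
            * ∫⁻ X in R k, ENNReal.ofReal (h X) :=
          lintegral_const_mul' _ _ ENNReal.ofReal_ne_top
      _ ≤ ENNReal.ofReal (cn * Cn * ((2:ℝ)^n)^(k+1) * Ek k)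
            * ∫⁻ X in Metric.ball (0:E) (sk k) ×ˢ Ioc (-(sk k)^2) (0:ℝ),
              ENNReal.ofReal (h X) :=
          mul_le_mul_right (lintegral_mono_set hRQ) _
      _ = ENNReal.ofReal (cn * Cn * ((2:ℝ)^n)^(k+1) * Ek k)
            * ENNReal.ofReal (∫ X in Metric.ball (0:E) (sk k) ×ˢ Ioc (-(sk k)^2) (0:ℝ), h X) := by
          rw [← ofReal_integral_eq_lintegral_ofReal (hIntk k)
            (Filter.Eventually.of_forall hh_nonneg)]
      _ ≤ ENNReal.ofReal (cn * Cn * ((2:ℝ)^n)^(k+1) * Ek k)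
            * ENNReal.ofReal ((((sk k)^n * V1 * (sk k)^2)) * (σt (sk k))^p) :=
          mul_le_mul_right (ENNReal.ofReal_le_ofReal (hcylB k)) _
      _ = ENNReal.ofReal ((cn * Cn * ((2:ℝ)^n)^(k+1) * Ek k)
            * ((((sk k)^n * V1 * (sk k)^2)) * (σt (sk k))^p)) := by
          rw [← ENNReal.ofReal_mul hW0']
      _ ≤ ENNReal.ofReal (mk k * Θ) := ENNReal.ofReal_le_ofReal (hrealk k)
  have hmain : (∫ X in D, g X) ≤ ρ^2 * (3000 * Θ) := by
    have hRHS0 : (0:ℝ) ≤ ρ^2 * (3000 * Θ) :=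
      mul_nonneg (by positivity) (mul_nonneg (by norm_num) hΘ0)
    have hkey : ENNReal.ofReal (∫ X in D, g X) ≤ ENNReal.ofReal (ρ^2 * (3000 * Θ)) := by
      have step0 : ENNReal.ofReal (∫ X in D, g X) ≤ ∫⁻ X in D, ENNReal.ofReal (g X) := by
        by_cases hig : IntegrableOn g D volume
        · rw [ofReal_integral_eq_lintegral_ofReal hig
            ((ae_restrict_mem hDmeas).mono hg_nonnegD)]
        · rw [integral_undef hig]
          simp
      have step1 : (∫⁻ X in D, ENNReal.ofReal (g X)) ≤ ∫⁻ X in D', ENNReal.ofReal (g X) := by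
        have hN0 : volume (Metric.ball (0:E) 1 ×ˢ ({0} : Set ℝ)) = 0 := by
          rw [show (volume : Measure (E×ℝ)) = (volume : Measure E).prod volume from
            MeasureTheory.Measure.volume_eq_prod E ℝ, Measure.prod_prod,
            Real.volume_singleton, mul_zero]
        have hDsub : D ⊆ D' ∪ Metric.ball (0:E) 1 ×ˢ ({0} : Set ℝ) := by
          rintro X ⟨hx1, hx2⟩
          rcases eq_or_lt_of_le hx2.2 with h0 | h0
          · right
            exact ⟨hx1, by simpa using h0⟩
          · left
            exact ⟨hx1, hx2.1, h0⟩
        calc (∫⁻ X in D, ENNReal.ofReal (g X))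
            ≤ ∫⁻ X in D' ∪ Metric.ball (0:E) 1 ×ˢ ({0} : Set ℝ), ENNReal.ofReal (g X) :=
              lintegral_mono_set hDsub
          _ ≤ (∫⁻ X in D', ENNReal.ofReal (g X))
              + ∫⁻ X in Metric.ball (0:E) 1 ×ˢ ({0} : Set ℝ), ENNReal.ofReal (g X) :=
              lintegral_union_le _ _ _
          _ = ∫⁻ X in D', ENNReal.ofReal (g X) := by
              rw [setLIntegral_measure_zero _ _ hN0, add_zero]
      have step2 : (∫⁻ X in D', ENNReal.ofReal (g X))
          ≤ ∑' k, ∫⁻ X in R k, ENNReal.ofReal (g X) := by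
        refine le_trans (lintegral_mono_set ?_) (lintegral_iUnion_le _ _)
        intro X hX
        obtain ⟨hx1, hx2⟩ := hX
        have hM0 : 0 < Mx X := by
          rw [hMx_def]
          exact lt_max_of_lt_right (Real.sqrt_pos.mpr (by linarith [hx2.2]))
        have hM1 : Mx X ≤ 1 := by
          rw [hMx_def]
          apply max_le (le_of_lt (mem_ball_zero_iff.mp hx1))
          have h1 : -X.2 ≤ ρ^2 := by linarith [hx2.1]
          calc Real.sqrt (-X.2) ≤ Real.sqrt (ρ^2) := Real.sqrt_le_sqrt h1
            _ = ρ := Real.sqrt_sq hρ0.le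
            _ ≤ 1 := hρ1
        obtain ⟨k, hk1, hk2⟩ := exists_dyadic (Mx X) hM0 hM1
        refine mem_iUnion.mpr ⟨k, ?_⟩
        rw [hR_def]
        exact ⟨⟨hx1, hx2⟩, hk1, hk2⟩
      have step3 : (∑' k, ∫⁻ X in R k, ENNReal.ofReal (g X))
          ≤ ENNReal.ofReal (ρ^2*(3000*Θ)) := by
        calc (∑' k, ∫⁻ X in R k, ENNReal.ofReal (g X))
            ≤ ∑' k, ENNReal.ofReal (mk k * Θ) := ENNReal.tsum_le_tsum hJk
          _ = ∑' k, ENNReal.ofReal (mk k) * ENNReal.ofReal Θ := by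
              congr 1
              funext k
              rw [← ENNReal.ofReal_mul (hmk_nonneg k)]
          _ = (∑' k, ENNReal.ofReal (mk k)) * ENNReal.ofReal Θ := ENNReal.tsum_mul_right
          _ ≤ ENNReal.ofReal (3000*ρ^2) * ENNReal.ofReal Θ := by
              apply mul_le_mul_left
              have := tsum_min_bound hρ0 hρ1
              rw [hmk_def]
              exact this
          _ = ENNReal.ofReal (ρ^2*(3000*Θ)) := by
              rw [← ENNReal.ofReal_mul (by positivity)]
              congr 1
              ring
      exact step0.trans (step1.trans (step2.trans step3))
    exact (ENNReal.ofReal_le_ofReal_iff hRHS0).mp hkey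

  -- Step C : conclusion
  have hI0 : 0 ≤ ∫ X in D, g X := setIntegral_nonneg hDmeas hg_nonnegD
  have hρ2 : (0:ℝ) < ρ^2 := by positivity
  have hfinal : (1/ρ^2) * (∫ X in D, g X) ≤ 3000 * Θ := by
    calc (1/ρ^2) * (∫ X in D, g X) ≤ (1/ρ^2) * (ρ^2 * (3000 * Θ)) :=
          mul_le_mul_of_nonneg_left hmain (by positivity)
      _ = 3000 * Θ := by field_simp
  have hLHS0 : 0 ≤ (1/ρ^2) * (∫ X in D, g X) := mul_nonneg (by positivity) hI0
  set A : ℝ := (3000 * K0) * (σt (Real.sqrt r))^p with hA_def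
  set B : ℝ := (3000 * K0 * Real.exp (1/16)) * ((σt 1)^p * Real.exp (-1/(256*r))) with hB_def
  have hA0 : 0 ≤ A := by
    have := Real.rpow_nonneg hσsr p
    positivity
  have hB0 : 0 ≤ B := by
    have := Real.rpow_nonneg hσ1 p
    positivity
  have hΘAB : 3000 * Θ = A + B := by rw [hΘ_def, hA_def, hB_def]; ring
  set C : ℝ := (3000 * K0 * Real.exp (1/16)) ^ (1/p) with hC_def
  have hCpos : 0 < C := by
    apply Real.rpow_pos_of_pos
    positivity
  have hApow : A ^ (1/p) ≤ C * σt (Real.sqrt r) := by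
    rw [hA_def, Real.mul_rpow (by positivity) (Real.rpow_nonneg hσsr p)]
    have h1 : ((σt (Real.sqrt r))^p) ^ (1/p) = σt (Real.sqrt r) := by
      rw [← Real.rpow_mul hσsr, mul_one_div, div_self hp0.ne', Real.rpow_one]
    rw [h1]
    apply mul_le_mul_of_nonneg_right _ hσsr
    rw [hC_def]
    apply Real.rpow_le_rpow (by positivity) _ (by positivity)
    have hE : (1:ℝ) ≤ Real.exp (1/16) := by linarith [Real.add_one_le_exp (1/16:ℝ)]
    nlinarith [hK0, hE]
  have hBpow : B ^ (1/p) = C * (σt 1 * Real.exp (-(1/(256*p))/r)) := by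
    rw [hB_def, Real.mul_rpow (by positivity)
      (mul_nonneg (Real.rpow_nonneg hσ1 p) (Real.exp_pos _).le), hC_def,
      Real.mul_rpow (Real.rpow_nonneg hσ1 p) (Real.exp_pos _).le]
    have h1 : ((σt 1)^p) ^ (1/p) = σt 1 := by
      rw [← Real.rpow_mul hσ1, mul_one_div, div_self hp0.ne', Real.rpow_one]
    have h2 : (Real.exp (-1/(256*r))) ^ (1/p) = Real.exp (-(1/(256*p))/r) := by
      rw [← Real.exp_mul]
      congr 1
      field_simp
    rw [h1, h2, mul_assoc]
  calc ((1/ρ^2) * (∫ X in D, g X)) ^ (1/p)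
      ≤ (3000 * Θ) ^ (1/p) := Real.rpow_le_rpow hLHS0 hfinal (by positivity)
    _ = (A + B) ^ (1/p) := by rw [hΘAB]
    _ ≤ A ^ (1/p) + B ^ (1/p) := real_rpow_add_le hA0 hB0 (by positivity)
          ((div_le_one hp0).mpr hp)
    _ ≤ C * (σt r + σt (Real.sqrt r) + σt 1 * Real.exp (-(1/(256*p))/r)) := by
        rw [hBpow]
        nlinarith [hApow, hCpos, hσr]
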